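/- Let z be an ℝⁿ-valued random vector satisfying E[exp(⟨v, z⟩)] ≤ exp(σ̂²‖v‖²/2) for all v ∈ ℝⁿ. Then for every λ with 0 < λ < 1/(2σ̂²), E[exp(λ‖z‖²)] ≤ (1 − 2σ̂²λ)^{−n/2}. -/

import Mathlib

open MeasureTheory Real Complex
open scoped RealInnerProductSpace

variable {n : ℕ}

lemma integrable_gauss_real {b : ℝ} (hb : 0 < b) (c : ℝ) (w : EuclideanSpace ℝ (Fin n)) :
    Integrable (fun v : EuclideanSpace ℝ (Fin n) => Real.exp (-b * ‖v‖ ^ 2 + c * ⟪w, v⟫)) := by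
  have h := (GaussianFourier.integrable_cexp_neg_mul_sq_norm_add (V := EuclideanSpace ℝ (Fin n))
    (show 0 < (b : ℂ).re from hb) (c : ℂ) w).norm
  convert h using 2 with v
  have harg : (-(b:ℂ) * (‖v‖:ℂ) ^ 2 + (c:ℂ) * ((⟪w,v⟫ : ℝ) : ℂ))
      = ((-b * ‖v‖ ^ 2 + c * ⟪w,v⟫ : ℝ) : ℂ) := by push_cast; ring
  rw [harg, ← Complex.ofReal_exp, Complex.norm_real, Real.norm_eq_abs, Real.abs_exp]

lemma gauss_real {b : ℝ} (hb : 0 < b) (c : ℝ) (w : EuclideanSpace ℝ (Fin n)) :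
    ∫ v : EuclideanSpace ℝ (Fin n), Real.exp (-b * ‖v‖ ^ 2 + c * ⟪w, v⟫)
      = (π / b) ^ ((n : ℝ) / 2) * Real.exp (c ^ 2 * ‖w‖ ^ 2 / (4 * b)) := by
  rw [← Complex.ofReal_inj]
  have h := GaussianFourier.integral_cexp_neg_mul_sq_norm_add (V := EuclideanSpace ℝ (Fin n))
    (show 0 < (b : ℂ).re from hb) (c : ℂ) w
  have h1 := Complex.ofRealLI.integral_comp_comm (μ := volume)
    (fun v : EuclideanSpace ℝ (Fin n) => Real.exp (-b * ‖v‖ ^ 2 + c * ⟪w, v⟫))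
  have h2 : ∀ v : EuclideanSpace ℝ (Fin n),
      (Complex.ofRealLI (Real.exp (-b * ‖v‖ ^ 2 + c * ⟪w, v⟫)) : ℂ)
      = Complex.exp (-(b:ℂ) * ‖v‖ ^ 2 + (c:ℂ) * ⟪w, v⟫) := by
    intro v
    have harg : (-(b:ℂ) * (‖v‖:ℂ) ^ 2 + (c:ℂ) * ((⟪w,v⟫ : ℝ) : ℂ))
        = ((-b * ‖v‖ ^ 2 + c * ⟪w,v⟫ : ℝ) : ℂ) := by push_cast; ring
    rw [harg, ← Complex.ofReal_exp]
    rfl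
  simp only [h2] at h1
  have h3 : (Complex.ofRealLI (∫ v : EuclideanSpace ℝ (Fin n),
      Real.exp (-b * ‖v‖ ^ 2 + c * ⟪w, v⟫)) : ℂ)
      = ((∫ v : EuclideanSpace ℝ (Fin n), Real.exp (-b * ‖v‖ ^ 2 + c * ⟪w, v⟫) : ℝ) : ℂ) := rfl
  rw [← h3, ← h1, h]
  have hrank : (Module.finrank ℝ (EuclideanSpace ℝ (Fin n)) : ℂ) = (n : ℂ) := by
    simp [finrank_euclideanSpace_fin]
  rw [hrank]
  rw [Complex.ofReal_mul, ← Complex.ofReal_div]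
  congr 1
  · have he : ((n : ℂ) / 2) = (((n : ℝ) / 2 : ℝ) : ℂ) := by push_cast; ring
    rw [he, ← Complex.ofReal_cpow (by positivity)]
  · rw [Complex.ofReal_exp]
    congr 1
    push_cast
    ring

theorem stmt_9 {Ω : Type*} [MeasurableSpace Ω] (μ : Measure Ω) [IsProbabilityMeasure μ]
    {n : ℕ} (z : Ω → EuclideanSpace ℝ (Fin n)) (hz : Measurable z) (σ : ℝ) (hσ : 0 < σ)
    (hsub : ∀ v : EuclideanSpace ℝ (Fin n),
      ∫ ω, Real.exp ⟪v, z ω⟫ ∂μ ≤ Real.exp (σ ^ 2 * ‖v‖ ^ 2 / 2))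
    (lam : ℝ) (hlam : 0 < lam) (hlam' : lam < 1 / (2 * σ ^ 2)) :
    ∫ ω, Real.exp (lam * ‖z ω‖ ^ 2) ∂μ ≤ (1 - 2 * σ ^ 2 * lam) ^ (-(n : ℝ) / 2) := by
  have hσ2 : (0:ℝ) < 2 * σ ^ 2 := by positivity
  have hs : 2 * σ ^ 2 * lam < 1 := by
    have h := (lt_div_iff₀ hσ2).mp hlam'
    nlinarith
  have h1s : (0:ℝ) < 1 - 2 * σ ^ 2 * lam := by linarith
  have hRHS : (0:ℝ) ≤ (1 - 2 * σ ^ 2 * lam) ^ (-(n : ℝ) / 2) :=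
    (Real.rpow_pos_of_pos h1s _).le
  -- case: not integrable
  by_cases hint : Integrable (fun ω => Real.exp (lam * ‖z ω‖ ^ 2)) μ
  swap
  · rw [integral_undef hint]; exact hRHS
  -- constants
  set b : ℝ := 1 / (4 * lam) with hbdef
  have hb : 0 < b := by positivity
  set K : ℝ := (π / b) ^ ((n : ℝ) / 2) with hKdef
  have hK : 0 < K := Real.rpow_pos_of_pos (by positivity) _
  set b' : ℝ := b - σ ^ 2 / 2 with hb'def
  have hb' : 0 < b' := by
    have : σ ^ 2 / 2 < b := by
      rw [hbdef]
      rw [lt_div_iff₀ (by positivity)]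
      nlinarith
    simp [hb'def]; linarith
  -- measurability of the main integrand
  have hm : Measurable fun ω => Real.exp (lam * ‖z ω‖ ^ 2) :=
    (Real.measurable_exp.comp ((hz.norm.pow_const 2).const_mul lam))
  -- integrability of exp inner
  have hintv : ∀ v : EuclideanSpace ℝ (Fin n),
      Integrable (fun ω => Real.exp ⟪v, z ω⟫) μ := by
    intro v
    apply Integrable.mono' (g := fun ω => Real.exp (‖v‖ ^ 2 / (4 * lam)) *
        Real.exp (lam * ‖z ω‖ ^ 2)) (hint.const_mul _)
    · exact (Real.measurable_exp.comp (measurable_const.inner hz)).aestronglyMeasurable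
    · filter_upwards with ω
      rw [Real.norm_eq_abs, Real.abs_exp, ← Real.exp_add]
      apply Real.exp_le_exp.mpr
      have h1 : ⟪v, z ω⟫ ≤ ‖v‖ * ‖z ω‖ := real_inner_le_norm v (z ω)
      have h2 : ‖v‖ * ‖z ω‖ ≤ ‖v‖ ^ 2 / (4 * lam) + lam * ‖z ω‖ ^ 2 := by
        rw [div_add' _ _ _ (by positivity : (4:ℝ) * lam ≠ 0), le_div_iff₀ (by positivity)]
        nlinarith [sq_nonneg (‖v‖ - 2 * lam * ‖z ω‖)]
      linarith
  -- key pointwise identity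
  have key : ∀ x : EuclideanSpace ℝ (Fin n), ENNReal.ofReal (Real.exp (lam * ‖x‖ ^ 2))
      = (ENNReal.ofReal K)⁻¹ *
        ∫⁻ v : EuclideanSpace ℝ (Fin n), ENNReal.ofReal (Real.exp (-b * ‖v‖ ^ 2 + ⟪x, v⟫)) := by
    intro x
    have hg : ∫ v : EuclideanSpace ℝ (Fin n), Real.exp (-b * ‖v‖ ^ 2 + ⟪x, v⟫)
        = K * Real.exp (lam * ‖x‖ ^ 2) := by
      have h := gauss_real (n := n) hb 1 x
      simp only [one_mul, one_pow] at h
      rw [h, hKdef]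
      congr 2
      rw [hbdef]
      field_simp
    have hgi : Integrable (fun v : EuclideanSpace ℝ (Fin n) =>
        Real.exp (-b * ‖v‖ ^ 2 + ⟪x, v⟫)) := by
      have := integrable_gauss_real (n := n) hb 1 x
      simpa using this
    rw [← MeasureTheory.ofReal_integral_eq_lintegral_ofReal hgi
      (Filter.Eventually.of_forall fun v => (Real.exp_pos _).le), hg,
      ENNReal.ofReal_mul hK.le, ← mul_assoc,
      ENNReal.inv_mul_cancel (by simpa using hK) ENNReal.ofReal_ne_top, one_mul]
  -- measurability on the product
  have hprod : AEMeasurable (fun p : Ω × EuclideanSpace ℝ (Fin n) =>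
      ENNReal.ofReal (Real.exp (-b * ‖p.2‖ ^ 2 + ⟪z p.1, p.2⟫))) (μ.prod volume) := by
    apply Measurable.aemeasurable
    apply ENNReal.measurable_ofReal.comp
    apply Real.measurable_exp.comp
    exact (((measurable_snd.norm.pow_const 2).const_mul (-b)).add
      ((hz.comp measurable_fst).inner measurable_snd))
  -- main lintegral estimate
  have main : ∫⁻ ω, ENNReal.ofReal (Real.exp (lam * ‖z ω‖ ^ 2)) ∂μ
      ≤ ENNReal.ofReal ((1 - 2 * σ ^ 2 * lam) ^ (-(n : ℝ) / 2)) := by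
    have hKne : (ENNReal.ofReal K)⁻¹ ≠ ⊤ := by
      simp [ENNReal.inv_ne_top]
      simpa using hK
    calc ∫⁻ ω, ENNReal.ofReal (Real.exp (lam * ‖z ω‖ ^ 2)) ∂μ
        = ∫⁻ ω, (ENNReal.ofReal K)⁻¹ *
            ∫⁻ v, ENNReal.ofReal (Real.exp (-b * ‖v‖ ^ 2 + ⟪z ω, v⟫)) ∂volume ∂μ := by
          simp_rw [key]
      _ = (ENNReal.ofReal K)⁻¹ * ∫⁻ ω, (∫⁻ v,
            ENNReal.ofReal (Real.exp (-b * ‖v‖ ^ 2 + ⟪z ω, v⟫)) ∂volume) ∂μ :=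
          lintegral_const_mul' _ _ hKne
      _ = (ENNReal.ofReal K)⁻¹ * ∫⁻ v, (∫⁻ ω,
            ENNReal.ofReal (Real.exp (-b * ‖v‖ ^ 2 + ⟪z ω, v⟫)) ∂μ) ∂volume := by
          rw [lintegral_lintegral_swap hprod]
      _ ≤ (ENNReal.ofReal K)⁻¹ * ∫⁻ v : EuclideanSpace ℝ (Fin n),
            ENNReal.ofReal (Real.exp (-b * ‖v‖ ^ 2 + σ ^ 2 * ‖v‖ ^ 2 / 2)) ∂volume := by
          apply mul_le_mul_right
          apply lintegral_mono
          intro v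
          have hsplit : ∀ ω, Real.exp (-b * ‖v‖ ^ 2 + ⟪z ω, v⟫)
              = Real.exp (-b * ‖v‖ ^ 2) * Real.exp ⟪v, z ω⟫ := by
            intro ω
            rw [← Real.exp_add, real_inner_comm]
          simp_rw [hsplit, ENNReal.ofReal_mul (Real.exp_pos _).le]
          rw [lintegral_const_mul' _ _ ENNReal.ofReal_ne_top]
          rw [← MeasureTheory.ofReal_integral_eq_lintegral_ofReal (hintv v)
            (Filter.Eventually.of_forall fun ω => (Real.exp_pos _).le)]
          rw [Real.exp_add, ENNReal.ofReal_mul (Real.exp_pos _).le]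
          exact mul_le_mul_right (ENNReal.ofReal_le_ofReal (hsub v)) _
      _ = (ENNReal.ofReal K)⁻¹ * ENNReal.ofReal ((π / b') ^ ((n : ℝ) / 2)) := by
          congr 1
          have hg : ∫ v : EuclideanSpace ℝ (Fin n), Real.exp (-b' * ‖v‖ ^ 2 + 0 * ⟪(0 : EuclideanSpace ℝ (Fin n)), v⟫)
              = (π / b') ^ ((n : ℝ) / 2) * Real.exp (0 ^ 2 * ‖(0 : EuclideanSpace ℝ (Fin n))‖ ^ 2 / (4 * b')) :=
            gauss_real hb' 0 0
          simp only [zero_mul, add_zero, ne_eq, OfNat.ofNat_ne_zero,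
            not_false_eq_true, zero_pow, zero_div, Real.exp_zero, mul_one] at hg
          have hgi : Integrable (fun v : EuclideanSpace ℝ (Fin n) =>
              Real.exp (-b' * ‖v‖ ^ 2)) := by
            have := integrable_gauss_real (n := n) hb' 0 0
            simpa using this
          have harg : ∀ v : EuclideanSpace ℝ (Fin n),
              -b * ‖v‖ ^ 2 + σ ^ 2 * ‖v‖ ^ 2 / 2 = -b' * ‖v‖ ^ 2 := by
            intro v; rw [hb'def]; ring
          simp_rw [harg]
          rw [← MeasureTheory.ofReal_integral_eq_lintegral_ofReal hgi
            (Filter.Eventually.of_forall fun v => (Real.exp_pos _).le), hg]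
      _ = ENNReal.ofReal ((1 - 2 * σ ^ 2 * lam) ^ (-(n : ℝ) / 2)) := by
          rw [← ENNReal.ofReal_inv_of_pos hK, ← ENNReal.ofReal_mul (by positivity)]
          congr 1
          rw [hKdef, ← Real.inv_rpow (by positivity), ← Real.mul_rpow (by positivity) (by positivity)]
          have hbase : (π / b)⁻¹ * (π / b') = (1 - 2 * σ ^ 2 * lam)⁻¹ := by
            have hbb : b' = (1 - 2 * σ ^ 2 * lam) * b := by
              rw [hb'def, hbdef]; field_simp; ring
            rw [inv_div, hbb]
            rw [div_mul_div_comm]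
            rw [inv_eq_one_div]
            rw [div_eq_div_iff (by positivity) h1s.ne']
            ring
          rw [hbase, Real.inv_rpow h1s.le, ← Real.rpow_neg h1s.le, neg_div]
  -- conclude
  rw [MeasureTheory.integral_eq_lintegral_of_nonneg_ae
    (Filter.Eventually.of_forall fun ω => (Real.exp_pos _).le) hm.aestronglyMeasurable]
  exact ENNReal.toReal_le_of_le_ofReal hRHS main
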